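/- (Hilbert–Schmidt form of the product theorem; the key step (eq. for the 2-Schatten norm) in the proof of Theorem 3.1, specialized to the circle.) For all continuous 2π-periodic functions f, g : ℝ → ℝ, one has lim_{k→∞} (1/k) Tr[ (T_k[f]·T_k[g] − T_k[f·g])·(T_k[f]·T_k[g] − T_k[f·g])^* ] = 0, i.e. the normalized squared Frobenius norm of T_k[f]·T_k[g] − T_k[f·g] tends to 0. -/

import Mathlib

open MeasureTheory Filter Matrix

/-- The `j`-th Fourier coefficient `a_j = (1/2π) ∫₀^{2π} f(θ) e^{-ijθ} dθ`
of a `2π`-periodic function `f : ℝ → ℝ`. -/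
noncomputable def fourierCoefficient (f : ℝ → ℝ) (j : ℤ) : ℂ :=
  (1 / (2 * Real.pi)) * ∫ θ in (0:ℝ)..(2 * Real.pi),
    (f θ : ℂ) * Complex.exp (-(Complex.I * (j : ℂ) * (θ : ℂ)))

/-- The `k × k` Toeplitz matrix `T_k[f]` with entries `(T_k[f])_{pq} = a_{p-q}`. -/
noncomputable def toeplitzMatrix (f : ℝ → ℝ) (k : ℕ) : Matrix (Fin k) (Fin k) ℂ :=
  Matrix.of fun p q => fourierCoefficient f ((p : ℤ) - (q : ℤ))


open Set Submodule

noncomputable section Aux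

instance : Fact (0 < 2 * Real.pi) := ⟨by positivity⟩

abbrev AC := AddCircle (2 * Real.pi)

/-- Toeplitz matrix of a continuous function on the circle. -/
def Tm (h : C(AC, ℂ)) (k : ℕ) : Matrix (Fin k) (Fin k) ℂ :=
  Matrix.of fun p q => fourierCoeff (⇑h) ((p : ℤ) - (q : ℤ))

lemma contMap_integrable (u : C(AC, ℂ)) : Integrable (⇑u) (@AddCircle.haarAddCircle (2*Real.pi) _) := by
  have := (u.continuous.continuousOn.integrableOn_compact'
    (μ := @AddCircle.haarAddCircle (2*Real.pi) _) isCompact_univ MeasurableSet.univ)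
  rwa [integrableOn_univ] at this

/-- lift of a continuous periodic function -/
def perLift {f : ℝ → ℂ} (hper : Function.Periodic f (2 * Real.pi)) (hf : Continuous f) :
    C(AC, ℂ) :=
  ⟨hper.lift, hf.quotient_liftOn' _⟩

lemma perLift_coe {f : ℝ → ℂ} (hper : Function.Periodic f (2 * Real.pi)) (hf : Continuous f)
    (x : ℝ) : perLift hper hf (x : AC) = f x := rfl

end Aux

section Bridge

lemma bridge (f : ℝ → ℝ) (hf : Continuous f) (hfper : Function.Periodic f (2 * Real.pi)) (j : ℤ) :
    fourierCoefficient f j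
      = fourierCoeff (⇑(perLift (f := fun θ => (f θ : ℂ))
          (fun x => by simp [hfper x]) (Complex.continuous_ofReal.comp hf))) j := by
  rw [fourierCoeff_eq_intervalIntegral _ j 0]
  rw [fourierCoefficient]
  rw [zero_add, Complex.real_smul]
  congr 1
  · push_cast; ring
  · apply intervalIntegral.integral_congr
    intro x _
    show _ = (fourier (-j)) (x : AC) • ((f x : ℂ))
    rw [smul_eq_mul, fourier_coe_apply]
    have h2 : (2 * (Real.pi:ℂ)) ≠ 0 := by
      simp [Real.pi_ne_zero]
    have he : 2 * (Real.pi:ℂ) * Complex.I * ((-j : ℤ) : ℂ) * (x:ℂ) / ((2*Real.pi : ℝ):ℂ)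
        = -(Complex.I * j * x) := by
      push_cast
      field_simp
    rw [he]
    ring

end Bridge

section FCLemmas

open AddCircle ContinuousMap

local notation "μ0" => @AddCircle.haarAddCircle (2*Real.pi) _

lemma cont_integrable' {E : Type*} [NormedAddCommGroup E] {w : AC → E} (hw : Continuous w) :
    Integrable w μ0 := by
  have := (hw.continuousOn.integrableOn_compact' (μ := μ0) isCompact_univ MeasurableSet.univ)
  rwa [integrableOn_univ] at this

lemma fc_add (u v : C(AC, ℂ)) (n : ℤ) :
    fourierCoeff (⇑(u + v)) n = fourierCoeff (⇑u) n + fourierCoeff (⇑v) n := by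
  simp only [fourierCoeff, ContinuousMap.add_apply, smul_add]
  apply integral_add
  · exact cont_integrable' ((map_continuous (fourier (-n))).smul u.continuous)
  · exact cont_integrable' ((map_continuous (fourier (-n))).smul v.continuous)

lemma fc_smul (c : ℂ) (u : C(AC, ℂ)) (n : ℤ) :
    fourierCoeff (⇑(c • u)) n = c * fourierCoeff (⇑u) n := by
  have : ⇑(c • u) = c • ⇑u := rfl
  rw [this, fourierCoeff.const_smul, smul_eq_mul]

lemma fc_fourier (m n : ℤ) :
    fourierCoeff (⇑(@fourier (2*Real.pi) m)) n = if n = m then 1 else 0 := by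
  have h := orthonormal_fourier (T := 2*Real.pi)
  rw [orthonormal_iff_ite] at h
  have h2 := h n m
  rw [ContinuousMap.inner_toLp μ0 (fourier n) (fourier m)] at h2
  rw [fourierCoeff]
  rw [← h2]
  apply integral_congr_ae
  filter_upwards with t
  rw [smul_eq_mul, ← fourier_neg, mul_comm]

lemma tsum_sq_fc (u : C(AC, ℂ)) :
    ∑' n : ℤ, ‖fourierCoeff (⇑u) n‖ ^ 2 = ∫ t, ‖u t‖ ^ 2 ∂μ0 := by
  have h := tsum_sq_fourierCoeff (toLp (E := ℂ) 2 μ0 ℂ u)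
  simp_rw [fourierCoeff_toLp] at h
  rw [h]
  apply integral_congr_ae
  filter_upwards [ContinuousMap.coeFn_toLp (p := 2) (𝕜 := ℂ) μ0 (f := u)] with t ht
  rw [ht]

lemma summable_sq_fc (u : C(AC, ℂ)) :
    Summable (fun n : ℤ => ‖fourierCoeff (⇑u) n‖ ^ 2) := by
  have hm := lp.memℓp (fourierBasis.repr (toLp (E := ℂ) 2 μ0 ℂ u))
  rw [memℓp_gen_iff (by norm_num)] at hm
  have : ∀ n : ℤ, ‖fourierCoeff (⇑u) n‖ ^ 2
      = ‖(fourierBasis.repr (toLp (E := ℂ) 2 μ0 ℂ u)) n‖ ^ (ENNReal.toReal 2) := by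
    intro n
    rw [fourierBasis_repr, fourierCoeff_toLp]
    norm_num [Real.rpow_natCast]
  exact hm.congr (fun n => (this n).symm)

lemma int_sq_le (u : C(AC, ℂ)) : ∫ t, ‖u t‖ ^ 2 ∂μ0 ≤ ‖u‖ ^ 2 := by
  have h1 : ∫ t, ‖u t‖ ^ 2 ∂μ0 ≤ ∫ _t, ‖u‖ ^ 2 ∂μ0 := by
    apply integral_mono ?_ (integrable_const _)
    · intro t
      show ‖u t‖ ^ 2 ≤ ‖u‖ ^ 2
      exact pow_le_pow_left₀ (norm_nonneg _) (u.norm_coe_le_norm t) 2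
    · exact cont_integrable' ((u.continuous.norm).pow 2)
  simpa using h1

end FCLemmas

section HS

attribute [local instance] Matrix.frobeniusSeminormedAddCommGroup
  Matrix.frobeniusNormedAddCommGroup Matrix.frobeniusNormedSpace

open AddCircle ContinuousMap

local notation "μ0" => @AddCircle.haarAddCircle (2*Real.pi) _

lemma frob_sq {k : ℕ} (A : Matrix (Fin k) (Fin k) ℂ) :
    ‖A‖ ^ 2 = ∑ p, ∑ q, ‖A p q‖ ^ 2 := by
  have h0 : (0:ℝ) ≤ ∑ p, ∑ q, ‖A p q‖ ^ (2:ℝ) := by positivity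
  rw [Matrix.frobenius_norm_def,
    ← Real.rpow_natCast ((∑ p, ∑ q, ‖A p q‖ ^ (2:ℝ)) ^ (1/2:ℝ)) 2,
    ← Real.rpow_mul h0]
  norm_num

lemma fc_zero_fun (n : ℤ) : fourierCoeff (⇑(0 : C(AC, ℂ))) n = 0 := by
  simp [fourierCoeff]

lemma fc_sum {ι : Type*} (s : Finset ι) (w : ι → C(AC, ℂ)) (n : ℤ) :
    fourierCoeff (⇑(∑ i ∈ s, w i)) n = ∑ i ∈ s, fourierCoeff (⇑(w i)) n := by
  classical
  induction s using Finset.induction_on with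
  | empty => simpa using fc_zero_fun n
  | insert x s hx ih =>
    rw [Finset.sum_insert hx, Finset.sum_insert hx, fc_add, ih]

lemma fc_mul_fourier (h : C(AC, ℂ)) (m n : ℤ) :
    fourierCoeff (⇑(h * fourier (T := 2*Real.pi) m)) n = fourierCoeff (⇑h) (n - m) := by
  simp only [fourierCoeff]
  apply integral_congr_ae
  filter_upwards with t
  simp only [ContinuousMap.mul_apply, smul_eq_mul]
  rw [(by ring : -(n - m) = -n + m), fourier_add]
  ring

lemma Tm_add (u v : C(AC, ℂ)) (k : ℕ) : Tm (u + v) k = Tm u k + Tm v k := by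
  ext p q; exact fc_add u v _

lemma Tm_sub (u v : C(AC, ℂ)) (k : ℕ) : Tm (u - v) k = Tm u k - Tm v k := by
  have : u - v + v = u := by ring
  have h2 := Tm_add (u - v) v k
  rw [this] at h2
  rw [h2, add_sub_cancel_right]

lemma Tm_smul (c : ℂ) (u : C(AC, ℂ)) (k : ℕ) : Tm (c • u) k = c • Tm u k := by
  ext p q; exact fc_smul c u _

lemma mulVec_Tm (h : C(AC, ℂ)) {k : ℕ} (v : Fin k → ℂ) (p : Fin k) :
    (Tm h k).mulVec v p
      = fourierCoeff (⇑(h * ∑ q : Fin k, v q • fourier (T := 2*Real.pi) (q : ℤ))) (p : ℤ) := by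
  have : h * ∑ q : Fin k, v q • fourier (T := 2*Real.pi) (q : ℤ)
      = ∑ q : Fin k, v q • (h * fourier (T := 2*Real.pi) (q : ℤ)) := by
    rw [Finset.mul_sum]
    apply Finset.sum_congr rfl; intro q _
    rw [mul_smul_comm]
  rw [this, fc_sum]
  rw [Matrix.mulVec, dotProduct]
  apply Finset.sum_congr rfl; intro q _
  rw [fc_smul, fc_mul_fourier]
  show fourierCoeff (⇑h) ((p:ℤ) - (q:ℤ)) * v q = _
  ring

lemma fc_trigpoly {k : ℕ} (v : Fin k → ℂ) (n : ℤ) :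
    fourierCoeff (⇑(∑ q : Fin k, v q • fourier (T := 2*Real.pi) (q : ℤ))) n
      = ∑ q : Fin k, v q * (if n = (q : ℤ) then 1 else 0) := by
  rw [fc_sum]
  apply Finset.sum_congr rfl; intro q _
  rw [fc_smul, fc_fourier]

end HS

section OpBound

attribute [local instance] Matrix.frobeniusSeminormedAddCommGroup
  Matrix.frobeniusNormedAddCommGroup Matrix.frobeniusNormedSpace

open AddCircle ContinuousMap

local notation "μ0" => @AddCircle.haarAddCircle (2*Real.pi) _

lemma coe_int_inj (k : ℕ) : Function.Injective (fun p : Fin k => (p : ℤ)) := by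
  intro a b h
  simp only [Int.natCast_inj] at h
  exact Fin.val_injective h

lemma sum_sq_fc_le' (u : C(AC, ℂ)) {k : ℕ} (e : Fin k → ℤ) (he : Function.Injective e) :
    ∑ p : Fin k, ‖fourierCoeff (⇑u) (e p)‖ ^ 2 ≤ ∫ t, ‖u t‖ ^ 2 ∂μ0 := by
  have h1 := Summable.sum_le_tsum (Finset.univ.map ⟨e, he⟩)
    (fun i _ => by positivity) (summable_sq_fc u)
  rw [Finset.sum_map] at h1
  rw [tsum_sq_fc] at h1
  simpa using h1

lemma tsum_V {k : ℕ} (v : Fin k → ℂ) :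
    ∫ t, ‖(∑ q : Fin k, v q • fourier (T := 2*Real.pi) (q : ℤ)) t‖ ^ 2 ∂μ0
      = ∑ q : Fin k, ‖v q‖ ^ 2 := by
  rw [← tsum_sq_fc]
  rw [tsum_eq_sum (s := Finset.univ.map ⟨_, coe_int_inj k⟩)
    (f := fun n => ‖fourierCoeff (⇑(∑ q : Fin k, v q • fourier (T := 2*Real.pi) (q : ℤ))) n‖ ^ 2)
    ?_]
  · rw [Finset.sum_map]
    apply Finset.sum_congr rfl; intro p _
    congr 1
    rw [Function.Embedding.coeFn_mk, fc_trigpoly]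
    rw [Finset.sum_eq_single p]
    · simp
    · intro q _ hq
      have : ((p : Fin k) : ℤ) ≠ (q : ℤ) := fun hc => hq (coe_int_inj k hc).symm
      simp [this]
    · simp
  · intro n hn
    have hfc := fc_trigpoly v n
    rw [hfc]
    have : ∀ q : Fin k, n ≠ (q : ℤ) := by
      intro q hc
      apply hn
      rw [Finset.mem_map]
      exact ⟨q, Finset.mem_univ q, hc.symm⟩
    rw [Finset.sum_eq_zero]
    · simp
    · intro q _
      simp [this q]

lemma op_bound (h : C(AC, ℂ)) {k : ℕ} (v : Fin k → ℂ) :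
    ∑ p, ‖(Tm h k).mulVec v p‖ ^ 2 ≤ ‖h‖ ^ 2 * ∑ q, ‖v q‖ ^ 2 := by
  set V := ∑ q : Fin k, v q • fourier (T := 2*Real.pi) (q : ℤ) with hV
  calc ∑ p, ‖(Tm h k).mulVec v p‖ ^ 2
      = ∑ p : Fin k, ‖fourierCoeff (⇑(h * V)) ((fun p : Fin k => (p:ℤ)) p)‖ ^ 2 := by
        apply Finset.sum_congr rfl; intro p _
        rw [mulVec_Tm]
    _ ≤ ∫ t, ‖(h * V) t‖ ^ 2 ∂μ0 := sum_sq_fc_le' _ _ (coe_int_inj k)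
    _ ≤ ∫ t, ‖h‖ ^ 2 * ‖V t‖ ^ 2 ∂μ0 := by
        apply integral_mono (cont_integrable' (((h * V).continuous.norm).pow 2))
          ((cont_integrable' ((V.continuous.norm).pow 2)).const_mul _)
        intro t
        show ‖(h * V) t‖ ^ 2 ≤ _
        rw [ContinuousMap.mul_apply, norm_mul, mul_pow]
        have := h.norm_coe_le_norm t
        have h2 : ‖h t‖^2 ≤ ‖h‖^2 := by nlinarith [norm_nonneg (h t)]
        show ‖h t‖ ^ 2 * ‖V t‖ ^ 2 ≤ ‖h‖ ^ 2 * ‖V t‖ ^ 2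
        exact mul_le_mul_of_nonneg_right h2 (by positivity)
    _ = ‖h‖ ^ 2 * ∫ t, ‖V t‖ ^ 2 ∂μ0 := integral_const_mul _ _
    _ = ‖h‖ ^ 2 * ∑ q, ‖v q‖ ^ 2 := by rw [tsum_V]

lemma frob_Tm_mul_le (h : C(AC, ℂ)) {k : ℕ} (B : Matrix (Fin k) (Fin k) ℂ) :
    ‖Tm h k * B‖ ≤ ‖h‖ * ‖B‖ := by
  have hsq : ‖Tm h k * B‖ ^ 2 ≤ (‖h‖ * ‖B‖) ^ 2 := by
    rw [frob_sq, Finset.sum_comm]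
    have hcol : ∀ q : Fin k, ∑ p, ‖(Tm h k * B) p q‖ ^ 2 ≤ ‖h‖ ^ 2 * ∑ r, ‖B r q‖ ^ 2 := by
      intro q
      have h2 := op_bound h (fun r => B r q)
      have h3 : ∀ p, (Tm h k * B) p q = (Tm h k).mulVec (fun r => B r q) p := by
        intro p
        rw [Matrix.mul_apply, Matrix.mulVec, dotProduct]
      simp only [h3]
      exact h2
    calc ∑ q, ∑ p, ‖(Tm h k * B) p q‖ ^ 2
        ≤ ∑ q : Fin k, ‖h‖ ^ 2 * ∑ r, ‖B r q‖ ^ 2 := Finset.sum_le_sum (fun q _ => hcol q)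
      _ = ‖h‖ ^ 2 * ∑ q : Fin k, ∑ r, ‖B r q‖ ^ 2 := by rw [Finset.mul_sum]
      _ = (‖h‖ * ‖B‖) ^ 2 := by rw [Finset.sum_comm, ← frob_sq]; ring
  have h0 : (0:ℝ) ≤ ‖h‖ * ‖B‖ := by positivity
  nlinarith [norm_nonneg (Tm h k * B)]

lemma frob_Tm_le (h : C(AC, ℂ)) (k : ℕ) : ‖Tm h k‖ ≤ Real.sqrt k * ‖h‖ := by
  have hsq : ‖Tm h k‖ ^ 2 ≤ (k : ℝ) * ‖h‖ ^ 2 := by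
    rw [frob_sq]
    have hrow : ∀ p : Fin k, ∑ q : Fin k, ‖Tm h k p q‖ ^ 2 ≤ ‖h‖ ^ 2 := by
      intro p
      have he : Function.Injective (fun q : Fin k => (p : ℤ) - (q : ℤ)) := by
        intro a b hab
        simp only [sub_right_inj] at hab
        exact coe_int_inj k hab
      calc ∑ q : Fin k, ‖Tm h k p q‖ ^ 2
          = ∑ q : Fin k, ‖fourierCoeff (⇑h) ((fun q : Fin k => (p:ℤ) - (q:ℤ)) q)‖ ^ 2 := rfl
        _ ≤ ∫ t, ‖h t‖ ^ 2 ∂μ0 := sum_sq_fc_le' h _ he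
        _ ≤ ‖h‖ ^ 2 := int_sq_le h
    calc ∑ p : Fin k, ∑ q : Fin k, ‖Tm h k p q‖ ^ 2
        ≤ ∑ _p : Fin k, ‖h‖ ^ 2 := Finset.sum_le_sum (fun p _ => hrow p)
      _ = (k : ℝ) * ‖h‖ ^ 2 := by simp [Finset.sum_const]
  have h0 : (0:ℝ) ≤ Real.sqrt k * ‖h‖ := by positivity
  have hs : (Real.sqrt k * ‖h‖) ^ 2 = (k : ℝ) * ‖h‖ ^ 2 := by
    rw [mul_pow, Real.sq_sqrt (by positivity)]
  nlinarith [norm_nonneg (Tm h k)]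

end OpBound

section Mono

attribute [local instance] Matrix.frobeniusSeminormedAddCommGroup
  Matrix.frobeniusNormedAddCommGroup Matrix.frobeniusNormedSpace

/-- commutator-type error matrix -/
noncomputable def Err (u v : C(AC, ℂ)) (k : ℕ) : Matrix (Fin k) (Fin k) ℂ :=
  Tm u k * Tm v k - Tm (u * v) k

lemma fourier_mul (a b : ℤ) :
    (fourier (T := 2*Real.pi) a) * fourier b = fourier (a + b) := by
  ext x
  show fourier a x * fourier b x = fourier (a+b) x
  exact fourier_add.symm

lemma Err_fourier_entry (a b : ℤ) (k : ℕ) (p q : Fin k) :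
    ‖Err (fourier (T := 2*Real.pi) a) (fourier b) k p q‖ ^ 2
      = if ((p:ℤ) = (q:ℤ) + a + b ∧ ¬(0 ≤ (q:ℤ) + b ∧ (q:ℤ) + b < k)) then 1 else 0 := by
  have hTa : ∀ (r s : Fin k), Tm (fourier (T := 2*Real.pi) a) k r s
      = if (r:ℤ) - (s:ℤ) = a then 1 else 0 := by
    intro r s; show fourierCoeff _ _ = _; rw [fc_fourier]
  have hTb : ∀ (r s : Fin k), Tm (fourier (T := 2*Real.pi) b) k r s
      = if (r:ℤ) - (s:ℤ) = b then 1 else 0 := by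
    intro r s; show fourierCoeff _ _ = _; rw [fc_fourier]
  have hE : Err (fourier (T := 2*Real.pi) a) (fourier b) k p q
      = (∑ j : Fin k, (if (p:ℤ) - (j:ℤ) = a then (1:ℂ) else 0)
          * (if (j:ℤ) - (q:ℤ) = b then (1:ℂ) else 0))
        - (if (p:ℤ) - (q:ℤ) = a + b then 1 else 0) := by
    rw [Err, Matrix.sub_apply, Matrix.mul_apply]
    congr 1
    · apply Finset.sum_congr rfl; intro j _
      rw [hTa, hTb]
    · rw [fourier_mul]
      show fourierCoeff _ _ = _
      rw [fc_fourier]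
  by_cases hpq : (p:ℤ) = (q:ℤ) + a + b
  · by_cases hin : 0 ≤ (q:ℤ) + b ∧ (q:ℤ) + b < k
    · -- sum is 1, subtracted term is 1
      have hj0lt : ((q:ℤ) + b).toNat < k := by omega
      set j0 : Fin k := ⟨((q:ℤ) + b).toNat, hj0lt⟩ with hj0
      have hj0z : (j0 : ℤ) = (q:ℤ) + b := by
        simp [hj0, Int.toNat_of_nonneg hin.1]
      have hsum : (∑ j : Fin k, (if (p:ℤ) - (j:ℤ) = a then (1:ℂ) else 0)
          * (if (j:ℤ) - (q:ℤ) = b then (1:ℂ) else 0)) = 1 := by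
        rw [Finset.sum_eq_single j0]
        · rw [if_pos (by omega), if_pos (by omega), one_mul]
        · intro j _ hj
          have hne : (j:ℤ) ≠ (q:ℤ) + b := by
            intro hc
            exact hj (Fin.ext (by omega))
          have h1 : (p:ℤ) - (j:ℤ) ≠ a := by omega
          rw [if_neg h1, zero_mul]
        · intro hmem; exact absurd (Finset.mem_univ j0) hmem
      rw [hE, hsum, if_pos (by omega), if_neg (fun hc => hc.2 hin)]
      simp
    · -- q + b out of range: sum is 0, subtracted term is 1
      have hsum : (∑ j : Fin k, (if (p:ℤ) - (j:ℤ) = a then (1:ℂ) else 0)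
          * (if (j:ℤ) - (q:ℤ) = b then (1:ℂ) else 0)) = 0 := by
        apply Finset.sum_eq_zero
        intro j _
        have h1 : 0 ≤ (j:ℤ) := Int.natCast_nonneg _
        have h2 : (j:ℤ) < k := by exact_mod_cast j.isLt
        have hb : (j:ℤ) - (q:ℤ) ≠ b := by omega
        rw [if_neg hb, mul_zero]
      rw [hE, hsum, if_pos (by omega), if_pos ⟨hpq, hin⟩]
      simp
  · have hsum : (∑ j : Fin k, (if (p:ℤ) - (j:ℤ) = a then (1:ℂ) else 0)
        * (if (j:ℤ) - (q:ℤ) = b then (1:ℂ) else 0)) = 0 := by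
      apply Finset.sum_eq_zero
      intro j _
      by_cases h1 : (p:ℤ) - (j:ℤ) = a
      · have h2 : (j:ℤ) - (q:ℤ) ≠ b := by omega
        rw [if_pos h1, if_neg h2, mul_zero]
      · rw [if_neg h1, zero_mul]
    rw [hE, hsum, if_neg (by omega), if_neg (fun hc => hpq hc.1)]
    simp

lemma Err_fourier_bound (a b : ℤ) (k : ℕ) :
    ‖Err (fourier (T := 2*Real.pi) a) (fourier b) k‖ ^ 2 ≤ (b.natAbs : ℝ) := by
  rw [frob_sq, Finset.sum_comm]
  have hq : ∀ q : Fin k, ∑ p : Fin k,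
      ‖Err (fourier (T := 2*Real.pi) a) (fourier b) k p q‖ ^ 2
      ≤ if ¬(0 ≤ (q:ℤ) + b ∧ (q:ℤ) + b < k) then (1:ℝ) else 0 := by
    intro q
    simp only [Err_fourier_entry]
    by_cases hbad : ¬(0 ≤ (q:ℤ) + b ∧ (q:ℤ) + b < k)
    · rw [if_pos hbad, Finset.sum_boole]
      have hcard : (Finset.univ.filter
          (fun p : Fin k => (p:ℤ) = (q:ℤ) + a + b ∧ ¬(0 ≤ (q:ℤ) + b ∧ (q:ℤ) + b < k))).card ≤ 1 := by
        apply Finset.card_le_one.mpr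
        intro p1 h1 p2 h2
        rw [Finset.mem_filter] at h1 h2
        exact Fin.ext (by omega)
      exact_mod_cast hcard
    · rw [if_neg hbad]
      apply le_of_eq
      apply Finset.sum_eq_zero
      intro p _
      rw [if_neg (fun hc => hbad hc.2)]
  have hcount : (Finset.univ.filter
      (fun q : Fin k => ¬(0 ≤ (q:ℤ) + b ∧ (q:ℤ) + b < k))).card ≤ b.natAbs := by
    have := Finset.card_le_card_of_injOn
      (s := Finset.univ.filter (fun q : Fin k => ¬(0 ≤ (q:ℤ) + b ∧ (q:ℤ) + b < k)))
      (f := fun q : Fin k => if (q:ℤ) + b < 0 then q.val else k - 1 - q.val)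
      (t := Finset.range b.natAbs) ?_ ?_
    · simpa using this
    · intro q hmem
      rw [Finset.mem_coe, Finset.mem_filter] at hmem
      rw [Finset.mem_coe, Finset.mem_range]
      have h2 : (q:ℤ) < k := by exact_mod_cast q.isLt
      have h1 : (0:ℤ) ≤ (q:ℤ) := Int.natCast_nonneg _
      have hbad := hmem.2
      simp only
      by_cases hc : (q:ℤ) + b < 0
      · rw [if_pos hc]; omega
      · rw [if_neg hc]; omega
    · intro q1 h1 q2 h2 he
      rw [Finset.mem_coe, Finset.mem_filter] at h1 h2
      have hq1 : (q1:ℤ) < k := by exact_mod_cast q1.isLt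
      have hq2 : (q2:ℤ) < k := by exact_mod_cast q2.isLt
      have hb1 := h1.2
      have hb2 := h2.2
      apply Fin.ext
      simp only at he
      split_ifs at he <;> omega
  calc ∑ q : Fin k, ∑ p : Fin k,
        ‖Err (fourier (T := 2*Real.pi) a) (fourier b) k p q‖ ^ 2
      ≤ ∑ q : Fin k, if ¬(0 ≤ (q:ℤ) + b ∧ (q:ℤ) + b < k) then (1:ℝ) else 0 :=
        Finset.sum_le_sum (fun q _ => hq q)
    _ = ((Finset.univ.filter
        (fun q : Fin k => ¬(0 ≤ (q:ℤ) + b ∧ (q:ℤ) + b < k))).card : ℝ) := by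
        rw [Finset.sum_boole]
    _ ≤ (b.natAbs : ℝ) := by exact_mod_cast hcount

end Mono

section SpanBound

attribute [local instance] Matrix.frobeniusSeminormedAddCommGroup
  Matrix.frobeniusNormedAddCommGroup Matrix.frobeniusNormedSpace

lemma Tm_zero (k : ℕ) : Tm (0 : C(AC, ℂ)) k = 0 := by
  ext p q; exact fc_zero_fun _

lemma Err_add_left (u u' v : C(AC, ℂ)) (k : ℕ) :
    Err (u + u') v k = Err u v k + Err u' v k := by
  have h : (u + u') * v = u * v + u' * v := add_mul u u' v
  rw [Err, Err, Err, Tm_add, h, Tm_add]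
  noncomm_ring

lemma Err_add_right (u v v' : C(AC, ℂ)) (k : ℕ) :
    Err u (v + v') k = Err u v k + Err u v' k := by
  have h : u * (v + v') = u * v + u * v' := mul_add u v v'
  rw [Err, Err, Err, Tm_add, h, Tm_add]
  noncomm_ring

lemma Err_smul_left (c : ℂ) (u v : C(AC, ℂ)) (k : ℕ) :
    Err (c • u) v k = c • Err u v k := by
  have h : (c • u) * v = c • (u * v) := smul_mul_assoc c u v
  rw [Err, Err, Tm_smul, h, Tm_smul]
  rw [smul_sub, Matrix.smul_mul]

lemma Err_smul_right (c : ℂ) (u v : C(AC, ℂ)) (k : ℕ) :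
    Err u (c • v) k = c • Err u v k := by
  have h : u * (c • v) = c • (u * v) := mul_smul_comm c u v
  rw [Err, Err, Tm_smul, h, Tm_smul]
  rw [smul_sub, Matrix.mul_smul]

lemma Err_zero_left (v : C(AC, ℂ)) (k : ℕ) : Err 0 v k = 0 := by
  have h : (0 : C(AC, ℂ)) * v = 0 := zero_mul v
  rw [Err, h, Tm_zero, Matrix.zero_mul, sub_zero]

lemma Err_zero_right (u : C(AC, ℂ)) (k : ℕ) : Err u 0 k = 0 := by
  have h : u * (0 : C(AC, ℂ)) = 0 := mul_zero u
  rw [Err, h, Tm_zero, Matrix.mul_zero, sub_zero]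

lemma err_bounded_of_span (u v : C(AC, ℂ))
    (hu : u ∈ Submodule.span ℂ (Set.range (fourier (T := 2*Real.pi))))
    (hv : v ∈ Submodule.span ℂ (Set.range (fourier (T := 2*Real.pi)))) :
    ∃ C : ℝ, ∀ k, ‖Err u v k‖ ≤ C := by
  induction hu using Submodule.span_induction with
  | mem u hu =>
    obtain ⟨a, rfl⟩ := hu
    induction hv using Submodule.span_induction with
    | mem v hv =>
      obtain ⟨b, rfl⟩ := hv
      refine ⟨Real.sqrt b.natAbs, fun k => ?_⟩
      have h1 := Err_fourier_bound a b k
      nlinarith [norm_nonneg (Err (fourier (T := 2*Real.pi) a) (fourier b) k),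
        Real.sq_sqrt (by positivity : (0:ℝ) ≤ (b.natAbs : ℝ)),
        Real.sqrt_nonneg (b.natAbs : ℝ)]
    | zero =>
      exact ⟨0, fun k => by rw [Err_zero_right]; simp⟩
    | add v v' _ _ ih ih' =>
      obtain ⟨C1, h1⟩ := ih
      obtain ⟨C2, h2⟩ := ih'
      refine ⟨C1 + C2, fun k => ?_⟩
      rw [Err_add_right]
      exact (norm_add_le _ _).trans (add_le_add (h1 k) (h2 k))
    | smul c v _ ih =>
      obtain ⟨C1, h1⟩ := ih
      refine ⟨‖c‖ * C1, fun k => ?_⟩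
      rw [Err_smul_right, norm_smul]
      exact mul_le_mul_of_nonneg_left (h1 k) (norm_nonneg c)
  | zero =>
    exact ⟨0, fun k => by rw [Err_zero_left]; simp⟩
  | add u u' _ _ ih ih' =>
    obtain ⟨C1, h1⟩ := ih
    obtain ⟨C2, h2⟩ := ih'
    refine ⟨C1 + C2, fun k => ?_⟩
    rw [Err_add_left]
    exact (norm_add_le _ _).trans (add_le_add (h1 k) (h2 k))
  | smul c u _ ih =>
    obtain ⟨C1, h1⟩ := ih
    refine ⟨‖c‖ * C1, fun k => ?_⟩
    rw [Err_smul_left, norm_smul]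
    exact mul_le_mul_of_nonneg_left (h1 k) (norm_nonneg c)

end SpanBound

section Assembly

attribute [local instance] Matrix.frobeniusSeminormedAddCommGroup
  Matrix.frobeniusNormedAddCommGroup Matrix.frobeniusNormedSpace

lemma Err_decomp (F G P Q : C(AC, ℂ)) (k : ℕ) :
    Err F G k = Tm (F - P) k * Tm G k + Tm P k * Tm (G - Q) k
      + Tm (P * Q - F * G) k + Err P Q k := by
  rw [Err, Err, Tm_sub, Tm_sub, Tm_sub]
  noncomm_ring

set_option maxHeartbeats 2000000 in
lemma err_tendsto (F G : C(AC, ℂ)) :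
    Tendsto (fun k : ℕ => ‖Err F G k‖ ^ 2 / k) atTop (nhds 0) := by
  rw [Metric.tendsto_atTop]
  intro ε hε
  set M : ℝ := ‖F‖ + ‖G‖ + 1 with hM
  have hM1 : 1 ≤ M := by
    have h1 := norm_nonneg F; have h2 := norm_nonneg G
    simp only [hM]; linarith
  have hM0 : 0 < M := by linarith
  have hsε : 0 < Real.sqrt ε := Real.sqrt_pos.mpr hε
  set δ : ℝ := min 1 (Real.sqrt ε / (9 * M)) with hδdef
  have hδpos : 0 < δ := lt_min one_pos (by positivity)
  have hδ1 : δ ≤ 1 := min_le_left _ _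
  have hδ2 : δ ≤ Real.sqrt ε / (9 * M) := min_le_right _ _
  have hdense : ∀ (h : C(AC, ℂ)), ∃ P ∈ Submodule.span ℂ
      (Set.range (fourier (T := 2*Real.pi))), ‖h - P‖ < δ := by
    intro h
    have hmem : h ∈ (Submodule.span ℂ
        (Set.range (fourier (T := 2*Real.pi)))).topologicalClosure := by
      rw [span_fourier_closure_eq_top]; trivial
    have hcl : h ∈ closure ((Submodule.span ℂ
        (Set.range (fourier (T := 2*Real.pi)))) : Set C(AC, ℂ)) := hmem
    rw [Metric.mem_closure_iff] at hcl
    obtain ⟨P, hP, hd⟩ := hcl δ hδpos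
    exact ⟨P, hP, by rwa [dist_eq_norm] at hd⟩
  obtain ⟨P, hP, hFP⟩ := hdense F
  obtain ⟨Q, hQ, hGQ⟩ := hdense G
  obtain ⟨C, hC⟩ := err_bounded_of_span P Q hP hQ
  have hC0 : 0 ≤ C := le_trans (norm_nonneg _) (hC 0)
  have hPn : ‖P‖ ≤ M := by
    have h2 : ‖P‖ ≤ ‖F‖ + ‖F - P‖ := by
      calc ‖P‖ = ‖F - (F - P)‖ := by congr 1; abel
        _ ≤ ‖F‖ + ‖F - P‖ := norm_sub_le _ _
    have h3 := norm_nonneg G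
    simp only [hM]; linarith
  have hGn : ‖G‖ ≤ M := by
    have h3 := norm_nonneg F
    simp only [hM]; linarith
  have hPQFG : ‖P * Q - F * G‖ ≤ 2 * M * δ := by
    have h1 : P * Q - F * G = P * (Q - G) + (P - F) * G := by ring
    have hQG : ‖Q - G‖ ≤ δ := by rw [norm_sub_rev]; exact le_of_lt hGQ
    have hPF : ‖P - F‖ ≤ δ := by rw [norm_sub_rev]; exact le_of_lt hFP
    have h5 := norm_nonneg (Q - G); have h6 := norm_nonneg (P - F)
    calc ‖P * Q - F * G‖ = ‖P * (Q - G) + (P - F) * G‖ := by rw [h1]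
      _ ≤ ‖P * (Q - G)‖ + ‖(P - F) * G‖ := norm_add_le _ _
      _ ≤ ‖P‖ * ‖Q - G‖ + ‖P - F‖ * ‖G‖ := add_le_add (norm_mul_le _ _) (norm_mul_le _ _)
      _ ≤ 2 * M * δ := by nlinarith
  have key : ∀ k : ℕ, ‖Err F G k‖ ≤ Real.sqrt k * (4 * M * δ) + C := by
    intro k
    have hsk : 0 ≤ Real.sqrt k := Real.sqrt_nonneg _
    have h1 : ‖Tm (F - P) k * Tm G k‖ ≤ Real.sqrt k * (M * δ) := by
      calc ‖Tm (F - P) k * Tm G k‖ ≤ ‖F - P‖ * ‖Tm G k‖ := frob_Tm_mul_le _ _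
        _ ≤ ‖F - P‖ * (Real.sqrt k * ‖G‖) := by
            exact mul_le_mul_of_nonneg_left (frob_Tm_le G k) (norm_nonneg _)
        _ ≤ δ * (Real.sqrt k * M) := by
            apply mul_le_mul (le_of_lt hFP) (mul_le_mul_of_nonneg_left hGn hsk)
              (by positivity) (le_of_lt hδpos)
        _ = Real.sqrt k * (M * δ) := by ring
    have h2 : ‖Tm P k * Tm (G - Q) k‖ ≤ Real.sqrt k * (M * δ) := by
      calc ‖Tm P k * Tm (G - Q) k‖ ≤ ‖P‖ * ‖Tm (G - Q) k‖ := frob_Tm_mul_le _ _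
        _ ≤ ‖P‖ * (Real.sqrt k * ‖G - Q‖) := by
            exact mul_le_mul_of_nonneg_left (frob_Tm_le (G - Q) k) (norm_nonneg _)
        _ ≤ M * (Real.sqrt k * δ) := by
            apply mul_le_mul hPn (mul_le_mul_of_nonneg_left (le_of_lt hGQ) hsk)
              (by positivity) (le_of_lt hM0)
        _ = Real.sqrt k * (M * δ) := by ring
    have h3 : ‖Tm (P * Q - F * G) k‖ ≤ Real.sqrt k * (2 * M * δ) := by
      calc ‖Tm (P * Q - F * G) k‖ ≤ Real.sqrt k * ‖P * Q - F * G‖ := frob_Tm_le _ k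
        _ ≤ Real.sqrt k * (2 * M * δ) := mul_le_mul_of_nonneg_left hPQFG hsk
    have h4 := hC k
    calc ‖Err F G k‖
        = ‖Tm (F - P) k * Tm G k + Tm P k * Tm (G - Q) k
            + Tm (P * Q - F * G) k + Err P Q k‖ := by rw [← Err_decomp]
      _ ≤ ‖Tm (F - P) k * Tm G k + Tm P k * Tm (G - Q) k
            + Tm (P * Q - F * G) k‖ + ‖Err P Q k‖ := norm_add_le _ _
      _ ≤ (‖Tm (F - P) k * Tm G k + Tm P k * Tm (G - Q) k‖
            + ‖Tm (P * Q - F * G) k‖) + ‖Err P Q k‖ := by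
          exact add_le_add (norm_add_le _ _) le_rfl
      _ ≤ ((‖Tm (F - P) k * Tm G k‖ + ‖Tm P k * Tm (G - Q) k‖)
            + ‖Tm (P * Q - F * G) k‖) + ‖Err P Q k‖ := by
          exact add_le_add (add_le_add (norm_add_le _ _) le_rfl) le_rfl
      _ ≤ Real.sqrt k * (4 * M * δ) + C := by nlinarith
  refine ⟨max 1 ⌈(C / (4 * M * δ)) ^ 2⌉₊, fun k hk => ?_⟩
  have hk1 : (1:ℝ) ≤ (k:ℝ) := by
    have := le_trans (le_max_left 1 _) hk
    exact_mod_cast this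
  have hk0 : (0:ℝ) < (k:ℝ) := by linarith
  have hkc : (C / (4 * M * δ)) ^ 2 ≤ (k:ℝ) := by
    have h5 := le_trans (le_max_right 1 ⌈(C / (4 * M * δ)) ^ 2⌉₊) hk
    have := Nat.ceil_le.mp h5
    exact_mod_cast this
  have hCk : C ≤ Real.sqrt k * (4 * M * δ) := by
    have h6 : C / (4 * M * δ) ≤ Real.sqrt k := by
      have := Real.sqrt_le_sqrt hkc
      rwa [Real.sqrt_sq (by positivity)] at this
    have h7 : 0 < 4 * M * δ := by positivity
    calc C = (C / (4 * M * δ)) * (4 * M * δ) := by field_simp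
      _ ≤ Real.sqrt k * (4 * M * δ) := mul_le_mul_of_nonneg_right h6 (le_of_lt h7)
  have hfin : ‖Err F G k‖ ^ 2 / k ≤ 64 * M ^ 2 * δ ^ 2 := by
    have h8 : ‖Err F G k‖ ≤ Real.sqrt k * (8 * M * δ) := by
      have := key k
      linarith
    have hsk : 0 ≤ Real.sqrt k := Real.sqrt_nonneg _
    have h9 : ‖Err F G k‖ ^ 2 ≤ (Real.sqrt k) ^ 2 * (8 * M * δ) ^ 2 := by
      nlinarith [norm_nonneg (Err F G k)]
    rw [Real.sq_sqrt (by positivity : (0:ℝ) ≤ (k:ℝ))] at h9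
    rw [div_le_iff₀ hk0]
    nlinarith
  have hfin2 : 64 * M ^ 2 * δ ^ 2 < ε := by
    have h10 : 9 * M * δ ≤ Real.sqrt ε := by
      have h11 : 0 < 9 * M := by linarith
      calc 9 * M * δ ≤ 9 * M * (Real.sqrt ε / (9 * M)) :=
        mul_le_mul_of_nonneg_left hδ2 (le_of_lt h11)
        _ = Real.sqrt ε := by field_simp
    have hx : 0 ≤ 9 * M * δ := by positivity
    have h12 : (9 * M * δ) ^ 2 ≤ ε := by
      have hss := Real.sq_sqrt (le_of_lt hε)
      nlinarith [mul_le_mul h10 h10 hx (le_trans hx h10)]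
    have h13 : 0 < M ^ 2 * δ ^ 2 := by positivity
    nlinarith
  have hnn : 0 ≤ ‖Err F G k‖ ^ 2 / (k:ℝ) := by positivity
  show dist (‖Err F G k‖ ^ 2 / (k:ℝ)) 0 < ε
  rw [Real.dist_eq, sub_zero, abs_of_nonneg hnn]
  calc ‖Err F G k‖ ^ 2 / (k:ℝ) ≤ 64 * M ^ 2 * δ ^ 2 := hfin
    _ < ε := hfin2

end Assembly

section Final

attribute [local instance] Matrix.frobeniusSeminormedAddCommGroup
  Matrix.frobeniusNormedAddCommGroup Matrix.frobeniusNormedSpace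

lemma trace_mul_conjTranspose {k : ℕ} (A : Matrix (Fin k) (Fin k) ℂ) :
    (A * Aᴴ).trace = ((‖A‖ ^ 2 : ℝ) : ℂ) := by
  rw [frob_sq, Matrix.trace]
  push_cast
  apply Finset.sum_congr rfl; intro p _
  rw [Matrix.diag_apply, Matrix.mul_apply]
  apply Finset.sum_congr rfl; intro q _
  rw [Matrix.conjTranspose_apply, show star (A p q) = (starRingEnd ℂ) (A p q) from rfl,
    Complex.mul_conj, Complex.normSq_eq_norm_sq]
  push_cast
  ring


/-- **Hilbert–Schmidt form of the product theorem**: for continuous `2π`-periodic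
`f, g : ℝ → ℝ`, the normalized squared Frobenius norm
`(1/k) Tr[(T_k[f]·T_k[g] − T_k[f·g])·(T_k[f]·T_k[g] − T_k[f·g])ᴴ]` tends to `0`. -/
theorem hilbert_schmidt_product_theorem
    (f g : ℝ → ℝ) (hf : Continuous f) (hg : Continuous g)
    (hfper : Function.Periodic f (2 * Real.pi))
    (hgper : Function.Periodic g (2 * Real.pi)) :
    Tendsto (fun k : ℕ =>
        ((toeplitzMatrix f k * toeplitzMatrix g k
            - toeplitzMatrix (fun θ => f θ * g θ) k) *
          (toeplitzMatrix f k * toeplitzMatrix g k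
            - toeplitzMatrix (fun θ => f θ * g θ) k)ᴴ).trace / (k : ℂ))
      atTop (nhds 0) := by
  have hfc : Continuous (fun θ => ((f θ : ℂ))) := Complex.continuous_ofReal.comp hf
  have hgc : Continuous (fun θ => ((g θ : ℂ))) := Complex.continuous_ofReal.comp hg
  have hfcper : Function.Periodic (fun θ => ((f θ : ℂ))) (2 * Real.pi) := fun x => by
    simp [hfper x]
  have hgcper : Function.Periodic (fun θ => ((g θ : ℂ))) (2 * Real.pi) := fun x => by
    simp [hgper x]
  set F := perLift hfcper hfc with hFdef
  set G := perLift hgcper hgc with hGdef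
  have hTf : ∀ k, toeplitzMatrix f k = Tm F k := by
    intro k; ext p q
    exact bridge f hf hfper _
  have hTg : ∀ k, toeplitzMatrix g k = Tm G k := by
    intro k; ext p q
    exact bridge g hg hgper _
  have hTfg : ∀ k, toeplitzMatrix (fun θ => f θ * g θ) k = Tm (F * G) k := by
    intro k; ext p q
    show fourierCoefficient _ _ = _
    rw [bridge (fun θ => f θ * g θ) (hf.mul hg) (hfper.mul hgper)]
    congr 1
    ext x
    induction x using QuotientAddGroup.induction_on with
    | H a =>
      show ((f a * g a : ℝ) : ℂ) = (F * G) (a : AC)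
      rw [ContinuousMap.mul_apply]
      show _ = ((f a : ℂ)) * ((g a : ℂ))
      push_cast
      rfl
  have heq : (fun k : ℕ =>
        ((toeplitzMatrix f k * toeplitzMatrix g k
            - toeplitzMatrix (fun θ => f θ * g θ) k) *
          (toeplitzMatrix f k * toeplitzMatrix g k
            - toeplitzMatrix (fun θ => f θ * g θ) k)ᴴ).trace / (k : ℂ))
      = fun k : ℕ => ((‖Err F G k‖ ^ 2 / (k : ℝ) : ℝ) : ℂ) := by
    funext k
    rw [hTf k, hTg k, hTfg k]
    have hErr : Tm F k * Tm G k - Tm (F * G) k = Err F G k := rfl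
    rw [hErr, trace_mul_conjTranspose]
    push_cast
    ring
  rw [heq]
  have hcont := Complex.continuous_ofReal.tendsto (0 : ℝ)
  have := hcont.comp (err_tendsto F G)
  exact this.congr fun k => rfl
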